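/- For every integer r \geq 6, the inequality (2\sqrt{r-1} + 1)/(2\sqrt{r-1} + r) > \sqrt{2r-1}/(2r) + 1/\sqrt{2r-1} - 3/(2 r \sqrt{2r-1}) + 1/(r(2r-1)) holds. -/

import Mathlib

/-- For every integer `r ≥ 6`, the lower bound on the average data-node repair
bandwidth ratio of the OOP code strictly exceeds that of the proposed code. -/
theorem oop_vs_proposed_data (r : ℤ) (hr : 6 ≤ r) :
    (2 * Real.sqrt ((r : ℝ) - 1) + 1) / (2 * Real.sqrt ((r : ℝ) - 1) + (r : ℝ))
      > Real.sqrt (2 * (r : ℝ) - 1) / (2 * (r : ℝ))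
        + 1 / Real.sqrt (2 * (r : ℝ) - 1)
        - 3 / (2 * (r : ℝ) * Real.sqrt (2 * (r : ℝ) - 1))
        + 1 / ((r : ℝ) * (2 * (r : ℝ) - 1)) := by
  have hx : (6 : ℝ) ≤ (r : ℝ) := by exact_mod_cast hr
  set x : ℝ := (r : ℝ) with hxdef
  set t : ℝ := Real.sqrt (x - 1) with htdef
  set s : ℝ := Real.sqrt (2 * x - 1) with hsdef
  have ht2 : t ^ 2 = x - 1 := Real.sq_sqrt (by linarith)
  have hs2 : s ^ 2 = 2 * x - 1 := Real.sq_sqrt (by linarith)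
  have ht0 : 0 < t := Real.sqrt_pos.mpr (by linarith)
  have hs0 : 0 < s := Real.sqrt_pos.mpr (by linarith)
  have ht : 2 < t := by nlinarith
  have hx0 : (0 : ℝ) < x := by linarith
  have hxeq : x = t ^ 2 + 1 := by linarith
  -- rewrite RHS as a single fraction
  have hR : s / (2 * x) + 1 / s - 3 / (2 * x * s) + 1 / (x * (2 * x - 1))
      = (2 * (x - 1) * s + 1) / (x * (2 * x - 1)) := by
    rw [← hs2]
    field_simp
    linear_combination s * hs2
  rw [hR, gt_iff_lt, div_lt_div_iff₀ (by nlinarith) (by nlinarith)]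
  -- key polynomial inequality
  have hP : 0 < 4 * t ^ 5 * (t - 2) * (2 * t ^ 4 - 2 * t - 1) := by
    have h1 : 0 < t - 2 := by linarith
    have h2 : 0 < 2 * t ^ 4 - 2 * t - 1 := by nlinarith
    positivity
  have hC : 0 < 4 * t ^ 5 + 2 * t ^ 4 + 6 * t ^ 3 + 2 * t ^ 2 := by positivity
  have ha : 0 < 2 * t ^ 2 * s * (t + 1) ^ 2 := by positivity
  have hsq : (2 * t ^ 2 * s * (t + 1) ^ 2) ^ 2
      < (4 * t ^ 5 + 2 * t ^ 4 + 6 * t ^ 3 + 2 * t ^ 2) ^ 2 := by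
    have hss : s ^ 2 = 2 * t ^ 2 + 1 := by nlinarith
    nlinarith [hP, hss]
  have h1 : 2 * t ^ 2 * s * (t + 1) ^ 2
      < 4 * t ^ 5 + 2 * t ^ 4 + 6 * t ^ 3 + 2 * t ^ 2 := by nlinarith
  rw [hxeq]
  nlinarith [h1]
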